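/- Let k be a field, R a Noetherian k-algebra, and q a nonzero element of k, regarded as the central element q·1 of R. Let (σ, δ) be a q-skew derivation on R. Assume either that q is not a root of unity in k, or that k has characteristic 0 and q = 1. Then δ(N) ⊆ N, where N is the prime radical of R, i.e. its largest nilpotent two-sided ideal. -/

import Mathlib

private def qbin {k : Type*} [Field k] (q : k) : ℕ → ℕ → k
  | 0, 0 => 1
  | 0, _+1 => 0
  | n+1, 0 => qbin q n 0
  | n+1, i+1 => q ^ (i+1) * qbin q n (i+1) + qbin q n i

private def qprev {k : Type*} [Field k] (q : k) (n : ℕ) : ℕ → k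
  | 0 => 0
  | i+1 => qbin q n i

private lemma qbin_succ {k : Type*} [Field k] (q : k) (n i : ℕ) :
    qbin q (n+1) i = q ^ i * qbin q n i + qprev q n i := by
  cases i with
  | zero => simp [qbin, qprev]
  | succ i => rfl

private lemma qbin_zero {k : Type*} [Field k] (q : k) (n : ℕ) : qbin q n 0 = 1 := by
  induction n with
  | zero => rfl
  | succ n ih => rw [show qbin q (n+1) 0 = qbin q n 0 from rfl, ih]

private lemma qbin_of_lt {k : Type*} [Field k] (q : k) : ∀ n i : ℕ, n < i → qbin q n i = 0 := by
  intro n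
  induction n with
  | zero => intro i hi; match i, hi with | i+1, _ => rfl
  | succ n ih =>
    intro i hi
    match i, hi with
    | i+1, hi =>
      rw [show qbin q (n+1) (i+1) = q^(i+1) * qbin q n (i+1) + qbin q n i from rfl,
        ih _ (by omega), ih _ (by omega)]
      ring

private lemma qbin_diag {k : Type*} [Field k] (q : k) : ∀ n : ℕ, qbin q n n = 1 := by
  intro n
  induction n with
  | zero => rfl
  | succ n ih =>
    rw [show qbin q (n+1) (n+1) = q^(n+1) * qbin q n (n+1) + qbin q n n from rfl,
      qbin_of_lt q n (n+1) (by omega), ih]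
    ring

private lemma qbin_succ_self {k : Type*} [Field k] (q : k) :
    ∀ n : ℕ, qbin q (n+1) n = ∑ i ∈ Finset.range (n+1), q ^ i := by
  intro n
  induction n with
  | zero => simp [qbin]
  | succ n ih =>
    rw [show qbin q (n+2) (n+1) = q^(n+1) * qbin q (n+1) (n+1) + qbin q (n+1) n from rfl,
      qbin_diag, ih, Finset.sum_range_succ (fun i => q ^ i) (n+1)]
    ring

private def qfac {k : Type*} [Field k] (q : k) : ℕ → k
  | 0 => 1
  | n+1 => (∑ i ∈ Finset.range (n+1), q ^ i) * qfac q n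

private lemma qfac_succ {k : Type*} [Field k] (q : k) (n : ℕ) :
    qfac q (n+1) = (∑ i ∈ Finset.range (n+1), q ^ i) * qfac q n := rfl

private def Tw {R : Type*} [Ring R] (σ : R →+* R) (δ : R → R) : List R → R
  | [] => 1
  | a :: t => (⇑σ)^[t.length] (δ a) * Tw σ δ t

private lemma Tw_cons {R : Type*} [Ring R] (σ : R →+* R) (δ : R → R) (a : R) (t : List R) :
    Tw σ δ (a :: t) = (⇑σ)^[t.length] (δ a) * Tw σ δ t := rfl

private lemma Tw_nil {R : Type*} [Ring R] (σ : R →+* R) (δ : R → R) : Tw σ δ [] = 1 := rfl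

theorem stmt_6 {k : Type*} [Field k] {R : Type*} [Ring R] [Algebra k R]
    [IsNoetherianRing R]
    (q : k) (hq : q ≠ 0)
    (σ : R →+* R) (hσ : Function.Bijective σ)
    (δ : R → R) (hδadd : ∀ a b : R, δ (a + b) = δ a + δ b)
    (hleib : ∀ a b : R, δ (a * b) = δ a * b + σ a * δ b)
    (hqskew : ∀ x : R, δ (σ x) = algebraMap k R q * σ (δ x))
    (hσq : σ (algebraMap k R q) = algebraMap k R q)
    (hδq : δ (algebraMap k R q) = 0)
    (hroot : (¬ ∃ m : ℕ, 0 < m ∧ q ^ m = 1) ∨ (CharZero k ∧ q = 1))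
    (N : TwoSidedIdeal R)
    -- `N` is nilpotent:
    (hnilp : ∃ m : ℕ, 0 < m ∧ ∀ l : List R, l.length = m → (∀ y ∈ l, y ∈ N) → l.prod = 0)
    -- and contains every nilpotent two-sided ideal of `R`:
    (hlargest : ∀ (J : TwoSidedIdeal R) (m : ℕ), 0 < m →
      (∀ l : List R, l.length = m → (∀ y ∈ l, y ∈ J) → l.prod = 0) → J ≤ N) :
    ∀ x ∈ N, δ x ∈ N := by
  obtain ⟨m, hm, hmN⟩ := hnilp
  set A : k →+* R := algebraMap k R with hAdef
  -- basic properties of δ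
  have hδ0 : δ 0 = 0 := by
    have h := hδadd 0 0
    rw [add_zero] at h
    exact right_eq_add.mp h
  have hδ1 : δ 1 = 0 := by
    have h := hleib 1 1
    rw [mul_one, mul_one, map_one, one_mul] at h
    exact right_eq_add.mp h
  have hδneg : ∀ x : R, δ (-x) = - δ x := by
    intro x
    have h := hδadd x (-x)
    rw [add_neg_cancel, hδ0] at h
    exact (neg_eq_of_add_eq_zero_right h.symm).symm
  have hδsub : ∀ x y : R, δ (x - y) = δ x - δ y := by
    intro x y
    rw [sub_eq_add_neg, hδadd, hδneg, sub_eq_add_neg]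
  have hδsum : ∀ (s : Finset ℕ) (f : ℕ → R), δ (∑ i ∈ s, f i) = ∑ i ∈ s, δ (f i) := by
    intro s f
    exact map_sum (AddMonoidHom.mk' δ (fun a b => hδadd a b)) f s
  have hδit0 : ∀ n : ℕ, δ^[n] (0 : R) = 0 := by
    intro n
    induction n with
    | zero => rfl
    | succ n ih => rw [Function.iterate_succ_apply', ih, hδ0]
  -- the inverse of σ
  set e : R ≃+* R := RingEquiv.ofBijective σ hσ with hedef
  have he : ∀ x, e x = σ x := fun x => rfl
  have hes : ∀ x, σ (e.symm x) = x := by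
    intro x; rw [← he]; exact e.apply_symm_apply x
  have hse : ∀ x, e.symm (σ x) = x := by
    intro x; rw [← he]; exact e.symm_apply_apply x
  -- scalars fixed by σ and killed by δ
  have hσA : ∀ i : ℕ, σ (A (q ^ i)) = A (q ^ i) := by
    intro i
    rw [map_pow, map_pow, hσq]
  have hδσit : ∀ (i : ℕ) (z : R), δ ((⇑σ)^[i] z) = A (q ^ i) * (⇑σ)^[i] (δ z) := by
    intro i
    induction i with
    | zero => intro z; simp
    | succ i ih =>
      intro z
      rw [Function.iterate_succ_apply', hqskew, ih, map_mul, hσA,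
        show σ ((⇑σ)^[i] (δ z)) = (⇑σ)^[i+1] (δ z) from
          (Function.iterate_succ_apply' (⇑σ) i (δ z)).symm,
        pow_succ', map_mul, ← mul_assoc]
  have hGood : ∀ x : k, (σ (A x) = A x ∧ δ (A x) = 0) →
      ∀ y : k, (σ (A y) = A y ∧ δ (A y) = 0) →
      (σ (A (x * y)) = A (x * y) ∧ δ (A (x * y)) = 0) := by
    intro x hx y hy
    constructor
    · rw [map_mul, map_mul, hx.1, hy.1]
    · rw [map_mul, hleib, hx.2, hy.2, hx.1, mul_zero, zero_mul, add_zero]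
  have hGadd : ∀ x : k, (σ (A x) = A x ∧ δ (A x) = 0) →
      ∀ y : k, (σ (A y) = A y ∧ δ (A y) = 0) →
      (σ (A (x + y)) = A (x + y) ∧ δ (A (x + y)) = 0) := by
    intro x hx y hy
    constructor
    · rw [map_add, map_add, hx.1, hy.1]
    · rw [map_add, hδadd, hx.2, hy.2, add_zero]
  have hGq : σ (A q) = A q ∧ δ (A q) = 0 := ⟨hσq, hδq⟩
  have hG1 : σ (A (1:k)) = A 1 ∧ δ (A (1:k)) = 0 := by
    constructor
    · rw [map_one, map_one]
    · rw [map_one, hδ1]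
  have hG0 : σ (A (0:k)) = A 0 ∧ δ (A (0:k)) = 0 := by
    constructor
    · rw [map_zero, map_zero]
    · rw [map_zero, hδ0]
  have hGpow : ∀ i : ℕ, σ (A (q ^ i)) = A (q ^ i) ∧ δ (A (q ^ i)) = 0 := by
    intro i
    induction i with
    | zero => simpa using hG1
    | succ i ih => rw [pow_succ]; exact hGood _ ih _ hGq
  have hGsum : ∀ n : ℕ, σ (A (∑ i ∈ Finset.range n, q ^ i)) = A (∑ i ∈ Finset.range n, q ^ i) ∧
      δ (A (∑ i ∈ Finset.range n, q ^ i)) = 0 := by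
    intro n
    induction n with
    | zero => simpa using hG0
    | succ n ih => rw [Finset.sum_range_succ]; exact hGadd _ ih _ (hGpow n)
  have hGqbin : ∀ n i : ℕ, σ (A (qbin q n i)) = A (qbin q n i) ∧ δ (A (qbin q n i)) = 0 := by
    intro n
    induction n with
    | zero =>
      intro i
      match i with
      | 0 => exact hG1
      | i+1 => exact hG0
    | succ n ih =>
      intro i
      match i with
      | 0 => rw [show qbin q (n+1) 0 = qbin q n 0 from rfl]; exact ih 0
      | i+1 =>
        rw [show qbin q (n+1) (i+1) = q^(i+1) * qbin q n (i+1) + qbin q n i from rfl]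
        exact hGadd _ (hGood _ (hGpow (i+1)) _ (ih (i+1))) _ (ih i)
  -- N is stable under σ and σ⁻¹
  have hσN : ∀ x ∈ N, σ x ∈ N := by
    have hJ : (N.comap e.symm.toRingHom) ≤ N := by
      apply hlargest _ m hm
      intro l hl hmem
      have h0 : (l.map ⇑e.symm).prod = 0 := by
        apply hmN
        · rw [List.length_map, hl]
        · intro y hy
          obtain ⟨z, hz, rfl⟩ := List.mem_map.mp hy
          have := (TwoSidedIdeal.mem_comap _).mp (hmem z hz)
          simpa using this
      apply e.symm.injective
      rw [map_zero, ← h0]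
      simpa using map_list_prod e.symm.toRingHom l
    intro x hx
    refine hJ ?_
    rw [TwoSidedIdeal.mem_comap]
    simpa [hse] using hx
  have hesN : ∀ x ∈ N, e.symm x ∈ N := by
    have hJ : (N.comap (σ : R →+* R)) ≤ N := by
      apply hlargest _ m hm
      intro l hl hmem
      have h0 : (l.map ⇑σ).prod = 0 := by
        apply hmN
        · rw [List.length_map, hl]
        · intro y hy
          obtain ⟨z, hz, rfl⟩ := List.mem_map.mp hy
          exact (TwoSidedIdeal.mem_comap _).mp (hmem z hz)
      apply hσ.injective
      rw [map_zero, ← h0]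
      exact map_list_prod σ l
    intro x hx
    refine hJ ?_
    rw [TwoSidedIdeal.mem_comap]
    simpa [hes] using hx
  have hσitN : ∀ (i : ℕ), ∀ x ∈ N, (⇑σ)^[i] x ∈ N := by
    intro i
    induction i with
    | zero => intro x hx; exact hx
    | succ i ih =>
      intro x hx
      rw [Function.iterate_succ_apply']
      exact hσN _ (ih x hx)
  have hesitN : ∀ (i : ℕ), ∀ x ∈ N, (⇑e.symm)^[i] x ∈ N := by
    intro i
    induction i with
    | zero => intro x hx; exact hx
    | succ i ih =>
      intro x hx
      rw [Function.iterate_succ_apply']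
      exact hesN _ (ih x hx)
  have hsit_es : ∀ (i : ℕ) (x : R), (⇑σ)^[i] ((⇑e.symm)^[i] x) = x := by
    intro i
    induction i with
    | zero => intro x; rfl
    | succ i ih =>
      intro x
      rw [Function.iterate_succ_apply' (⇑e.symm), Function.iterate_succ_apply (⇑σ), hes]
      exact ih x
  -- central rearrangement
  have key : ∀ (c p : k) (w y : R), A c * (A p * w * y) = A p * A c * (w * y) := by
    intro c p w y
    rw [mul_assoc (A p) w y, ← mul_assoc (A c), ← map_mul, mul_comm c p, map_mul]
  -- the q-Leibniz rule
  have leib : ∀ (n : ℕ) (a b : R), δ^[n] (a * b) =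
      ∑ i ∈ Finset.range (n+1), A (qbin q n i) * ((⇑σ)^[i] (δ^[n-i] a) * δ^[i] b) := by
    intro n
    induction n with
    | zero =>
      intro a b
      simp [qbin]
    | succ n ih =>
      intro a b
      rw [Function.iterate_succ_apply', ih, hδsum]
      have hterm : ∀ i ∈ Finset.range (n+1),
          δ (A (qbin q n i) * ((⇑σ)^[i] (δ^[n-i] a) * δ^[i] b)) =
          A (q ^ i * qbin q n i) * ((⇑σ)^[i] (δ^[n+1-i] a) * δ^[i] b)
          + A (qbin q n i) * ((⇑σ)^[i+1] (δ^[n-i] a) * δ^[i+1] b) := by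
        intro i hi
        have hi' : i ≤ n := Finset.mem_range_succ_iff.mp hi
        rw [hleib, (hGqbin n i).2, zero_mul, zero_add, (hGqbin n i).1, hleib,
          hδσit i (δ^[n-i] a),
          show δ (δ^[n-i] a) = δ^[n-i+1] a from (Function.iterate_succ_apply' δ (n-i) a).symm,
          show n - i + 1 = n + 1 - i by omega,
          show σ ((⇑σ)^[i] (δ^[n-i] a)) = (⇑σ)^[i+1] (δ^[n-i] a) from
            (Function.iterate_succ_apply' (⇑σ) i (δ^[n-i] a)).symm,
          show δ (δ^[i] b) = δ^[i+1] b from (Function.iterate_succ_apply' δ i b).symm,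
          mul_add, map_mul]
        congr 1
        exact key _ _ _ _
      rw [Finset.sum_congr rfl hterm, Finset.sum_add_distrib]
      have h1 : ∀ i ∈ Finset.range (n+2),
          A (qbin q (n+1) i) * ((⇑σ)^[i] (δ^[n+1-i] a) * δ^[i] b)
          = A (q^i * qbin q n i) * ((⇑σ)^[i] (δ^[n+1-i] a) * δ^[i] b)
            + A (qprev q n i) * ((⇑σ)^[i] (δ^[n+1-i] a) * δ^[i] b) := by
        intro i _
        rw [qbin_succ, map_add, add_mul]
      rw [Finset.sum_congr rfl h1, Finset.sum_add_distrib]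
      congr 1
      · symm
        rw [Finset.sum_range_succ, qbin_of_lt q n (n+1) (by omega), mul_zero, map_zero,
          zero_mul, add_zero]
      · symm
        rw [Finset.sum_range_succ']
        have hg0 : A (qprev q n 0) * ((⇑σ)^[0] (δ^[n+1-0] a) * δ^[0] b) = 0 := by
          show A (0:k) * _ = 0
          rw [map_zero, zero_mul]
        rw [hg0, add_zero]
        refine Finset.sum_congr rfl ?_
        intro i _
        rw [show n + 1 - (i+1) = n - i from by omega]
        rfl
  have hAc : ∀ (c : k) (x : R), A c * x = x * A c := fun c x => Algebra.commutes c x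
  -- δ-iterates of products of elements of N stay in N (when fewer iterations than factors)
  have memB : ∀ (t : List R), (∀ y ∈ t, y ∈ N) → ∀ i : ℕ, i < t.length → δ^[i] t.prod ∈ N := by
    intro t
    induction t with
    | nil => intro _ i hi; simp at hi
    | cons a t iht =>
      intro hmem i hi
      have ha : a ∈ N := hmem a (by simp)
      have ht : ∀ y ∈ t, y ∈ N := fun y hy => hmem y (by simp [hy])
      rw [List.length_cons] at hi
      rw [List.prod_cons, leib i]
      refine sum_mem ?_
      intro r hr
      have hr' : r ≤ i := Finset.mem_range_succ_iff.mp hr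
      by_cases hcase : r < t.length
      · exact TwoSidedIdeal.mul_mem_left _ _ _
          (TwoSidedIdeal.mul_mem_left _ _ _ (iht ht r hcase))
      · have h1 : i - r = 0 := by omega
        rw [h1, Function.iterate_zero_apply]
        exact TwoSidedIdeal.mul_mem_left _ _ _
          (TwoSidedIdeal.mul_mem_right _ _ _ (hσitN r a ha))
  -- main congruence
  have memC : ∀ (t : List R), (∀ y ∈ t, y ∈ N) →
      δ^[t.length] t.prod - A (qfac q t.length) * Tw σ δ t ∈ N := by
    intro t
    induction t with
    | nil => simpa [qfac, Tw] using N.zero_mem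
    | cons a t iht =>
      intro hmem
      have ha : a ∈ N := hmem a (by simp)
      have ht : ∀ y ∈ t, y ∈ N := fun y hy => hmem y (by simp [hy])
      have hIH := iht ht
      rw [List.prod_cons, List.length_cons, leib (t.length + 1),
        Finset.sum_range_succ, Finset.sum_range_succ]
      have hS : (∑ r ∈ Finset.range t.length,
          A (qbin q (t.length+1) r) * ((⇑σ)^[r] (δ^[t.length+1-r] a) * δ^[r] t.prod)) ∈ N := by
        refine sum_mem ?_
        intro r hr
        exact TwoSidedIdeal.mul_mem_left _ _ _
          (TwoSidedIdeal.mul_mem_left _ _ _ (memB t ht r (Finset.mem_range.mp hr)))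
      have hlast : A (qbin q (t.length+1) (t.length+1)) *
          ((⇑σ)^[t.length+1] (δ^[t.length+1-(t.length+1)] a) * δ^[t.length+1] t.prod) ∈ N := by
        rw [Nat.sub_self, Function.iterate_zero_apply]
        exact TwoSidedIdeal.mul_mem_left _ _ _
          (TwoSidedIdeal.mul_mem_right _ _ _ (hσitN _ a ha))
      have hmid : A (qbin q (t.length+1) t.length) *
          ((⇑σ)^[t.length] (δ^[t.length+1-t.length] a) * δ^[t.length] t.prod)
          - A (qfac q (t.length+1)) * Tw σ δ (a :: t) ∈ N := by
        rw [show t.length + 1 - t.length = 1 from by omega, Function.iterate_one]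
        have hD : δ^[t.length] t.prod = A (qfac q t.length) * Tw σ δ t
            + (δ^[t.length] t.prod - A (qfac q t.length) * Tw σ δ t) := by abel
        rw [hD, mul_add, mul_add]
        have hXA : (⇑σ)^[t.length] (δ a) * (A (qfac q t.length) * Tw σ δ t)
            = A (qfac q t.length) * ((⇑σ)^[t.length] (δ a) * Tw σ δ t) := by
          rw [← mul_assoc, ← hAc (qfac q t.length) ((⇑σ)^[t.length] (δ a)), mul_assoc]
        rw [hXA, ← mul_assoc, ← map_mul, qbin_succ_self, ← qfac_succ, Tw_cons]
        have hrw : A (qfac q (t.length+1)) * ((⇑σ)^[t.length] (δ a) * Tw σ δ t)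
            + A (∑ i ∈ Finset.range (t.length+1), q ^ i) * ((⇑σ)^[t.length] (δ a) *
              (δ^[t.length] t.prod - A (qfac q t.length) * Tw σ δ t))
            - A (qfac q (t.length+1)) * ((⇑σ)^[t.length] (δ a) * Tw σ δ t)
            = A (∑ i ∈ Finset.range (t.length+1), q ^ i) * ((⇑σ)^[t.length] (δ a) *
              (δ^[t.length] t.prod - A (qfac q t.length) * Tw σ δ t)) := by abel
        rw [hrw]
        exact TwoSidedIdeal.mul_mem_left _ _ _ (TwoSidedIdeal.mul_mem_left _ _ _ hIH)
      have hcomb := N.add_mem hS (N.add_mem hmid hlast)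
      convert hcomb using 1
      abel
  -- nonvanishing of q-integers and q-factorials
  have hsne : ∀ n : ℕ, (∑ i ∈ Finset.range (n+1), q ^ i) ≠ 0 := by
    rcases hroot with h | ⟨hc, hq1⟩
    · intro n hn
      apply h
      refine ⟨n+1, Nat.succ_pos n, ?_⟩
      have hgs := geom_sum_mul q (n+1)
      rw [hn, zero_mul] at hgs
      exact (sub_eq_zero.mp hgs.symm)
    · subst hq1
      intro n hn
      simp only [one_pow, Finset.sum_const, Finset.card_range, nsmul_eq_mul, mul_one] at hn
      exact Nat.cast_ne_zero.mpr (Nat.succ_ne_zero n) hn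
  have hqfac_ne : ∀ n : ℕ, qfac q n ≠ 0 := by
    intro n
    induction n with
    | zero => simp [qfac]
    | succ n ih => rw [qfac_succ]; exact mul_ne_zero (hsne n) ih
  -- twisted products of elements of N lie in N
  have memT : ∀ t : List R, (∀ y ∈ t, y ∈ N) → t.length = m → Tw σ δ t ∈ N := by
    intro t ht hlen
    have h1 := memC t ht
    rw [hlen, hmN t hlen ht, hδit0 m, zero_sub] at h1
    have h2 := N.neg_mem h1
    rw [neg_neg] at h2
    have h3 : Tw σ δ t = A (qfac q m)⁻¹ * (A (qfac q m) * Tw σ δ t) := by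
      rw [← mul_assoc, ← map_mul, inv_mul_cancel₀ (hqfac_ne m), map_one, one_mul]
    rw [h3]
    exact TwoSidedIdeal.mul_mem_left _ _ _ h2
  -- the ideal J = δ(N) + N
  set Jset : Set R := {z | ∃ x ∈ N, ∃ w ∈ N, z = δ x + w} with hJsetdef
  have hJ0 : (0:R) ∈ Jset := ⟨0, N.zero_mem, 0, N.zero_mem, by rw [hδ0, add_zero]⟩
  have hJadd : ∀ {x y : R}, x ∈ Jset → y ∈ Jset → x + y ∈ Jset := by
    rintro x y ⟨a, ha, w, hw, rfl⟩ ⟨b, hb, v, hv, rfl⟩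
    exact ⟨a + b, N.add_mem ha hb, w + v, N.add_mem hw hv, by rw [hδadd]; abel⟩
  have hJneg : ∀ {x : R}, x ∈ Jset → -x ∈ Jset := by
    rintro x ⟨a, ha, w, hw, rfl⟩
    exact ⟨-a, N.neg_mem ha, -w, N.neg_mem hw, by rw [hδneg]; abel⟩
  have hJmulL : ∀ {r z : R}, z ∈ Jset → r * z ∈ Jset := by
    rintro r z ⟨a, ha, w, hw, rfl⟩
    refine ⟨e.symm r * a, TwoSidedIdeal.mul_mem_left _ _ _ ha,
      r * w - δ (e.symm r) * a, ?_, ?_⟩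
    · exact N.sub_mem (TwoSidedIdeal.mul_mem_left _ _ _ hw)
        (TwoSidedIdeal.mul_mem_left _ _ _ ha)
    · rw [hleib, hes, mul_add]
      abel
  have hJmulR : ∀ {z r : R}, z ∈ Jset → z * r ∈ Jset := by
    rintro z r ⟨a, ha, w, hw, rfl⟩
    refine ⟨a * r, TwoSidedIdeal.mul_mem_right _ _ _ ha,
      w * r - σ a * δ r, ?_, ?_⟩
    · exact N.sub_mem (TwoSidedIdeal.mul_mem_right _ _ _ hw)
        (TwoSidedIdeal.mul_mem_right _ _ _ (hσN a ha))
    · rw [hleib, add_mul]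
      abel
  set J : TwoSidedIdeal R := TwoSidedIdeal.mk' Jset hJ0 hJadd hJneg hJmulL hJmulR with hJdef
  have hmemJ : ∀ z : R, z ∈ J ↔ z ∈ Jset := fun z =>
    TwoSidedIdeal.mem_mk' Jset hJ0 hJadd hJneg hJmulL hJmulR z
  -- products in J reduce to products of δ's modulo N
  have claim1 : ∀ l : List R, (∀ z ∈ l, z ∈ Jset) → ∃ lx : List R,
      lx.length = l.length ∧ (∀ x ∈ lx, x ∈ N) ∧ l.prod - (lx.map δ).prod ∈ N := by
    intro l
    induction l with
    | nil => exact fun _ => ⟨[], rfl, by simp, by simp⟩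
    | cons z t iht =>
      intro hmem
      obtain ⟨x, hx, w, hw, hz⟩ := hmem z (by simp)
      obtain ⟨lx, hlen, hlxN, hprod⟩ := iht (fun y hy => hmem y (by simp [hy]))
      refine ⟨x :: lx, by simp [hlen], ?_, ?_⟩
      · intro y hy
        rcases List.mem_cons.mp hy with h | h
        · exact h ▸ hx
        · exact hlxN y h
      · rw [List.prod_cons, List.map_cons, List.prod_cons, hz]
        have hid : (δ x + w) * t.prod - δ x * (lx.map δ).prod
            = δ x * (t.prod - (lx.map δ).prod) + w * t.prod := by noncomm_ring
        rw [hid]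
        exact N.add_mem (TwoSidedIdeal.mul_mem_left _ _ _ hprod)
          (TwoSidedIdeal.mul_mem_right _ _ _ hw)
  -- products of δ's are scalar multiples of twisted products
  have claimD : ∀ lx : List R, (∀ x ∈ lx, x ∈ N) → ∃ (ly : List R) (wexp : ℕ),
      ly.length = lx.length ∧ (∀ y ∈ ly, y ∈ N) ∧
      (lx.map δ).prod = A (q ^ wexp) * Tw σ δ ly := by
    intro lx
    induction lx with
    | nil => exact fun _ => ⟨[], 0, rfl, by simp, by simp [Tw]⟩
    | cons x t iht =>
      intro hmem
      obtain ⟨ly, wexp, hlen, hlyN, hprod⟩ := iht (fun y hy => hmem y (by simp [hy]))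
      have hx : x ∈ N := hmem x (by simp)
      refine ⟨(⇑e.symm)^[t.length] x :: ly, wexp + t.length, by simp [hlen], ?_, ?_⟩
      · intro y hy
        rcases List.mem_cons.mp hy with h | h
        · exact h ▸ hesitN t.length x hx
        · exact hlyN y h
      · rw [List.map_cons, List.prod_cons, hprod]
        have hδx : δ x = A (q ^ t.length) * (⇑σ)^[t.length] (δ ((⇑e.symm)^[t.length] x)) := by
          conv_lhs => rw [← hsit_es t.length x]
          rw [hδσit]
        rw [hδx,
          show Tw σ δ ((⇑e.symm)^[t.length] x :: ly)
            = (⇑σ)^[ly.length] (δ ((⇑e.symm)^[t.length] x)) * Tw σ δ ly from rfl,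
          hlen, mul_assoc,
          ← mul_assoc ((⇑σ)^[t.length] (δ ((⇑e.symm)^[t.length] x))),
          ← hAc (q ^ wexp) ((⇑σ)^[t.length] (δ ((⇑e.symm)^[t.length] x))),
          ← mul_assoc, ← mul_assoc, ← map_mul, ← pow_add,
          show t.length + wexp = wexp + t.length from by omega, mul_assoc]
  -- products of m elements of J lie in N
  have prodJ : ∀ l : List R, l.length = m → (∀ z ∈ l, z ∈ J) → l.prod ∈ N := by
    intro l hlen hmem
    obtain ⟨lx, hlxlen, hlxN, hsub⟩ := claim1 l (fun z hz => (hmemJ z).mp (hmem z hz))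
    obtain ⟨ly, wexp, hlylen, hlyN, hprodeq⟩ := claimD lx hlxN
    have hTw : Tw σ δ ly ∈ N := memT ly hlyN (by rw [hlylen, hlxlen, hlen])
    have hmap : (lx.map δ).prod ∈ N := by
      rw [hprodeq]; exact TwoSidedIdeal.mul_mem_left _ _ _ hTw
    have hre : l.prod = (l.prod - (lx.map δ).prod) + (lx.map δ).prod := by abel
    rw [hre]
    exact N.add_mem hsub hmap
  -- chunking: products of m*c elements of J
  have chunk : ∀ (c : ℕ) (l : List R), l.length = m * c → (∀ z ∈ l, z ∈ J) →
      ∃ ln : List R, ln.length = c ∧ (∀ y ∈ ln, y ∈ N) ∧ l.prod = ln.prod := by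
    intro c
    induction c with
    | zero =>
      intro l hl _
      rw [Nat.mul_zero] at hl
      rw [List.length_eq_zero_iff.mp hl]
      exact ⟨[], rfl, by simp, rfl⟩
    | succ c ihc =>
      intro l hl hmem
      have hm_le : m ≤ l.length := by
        rw [hl, Nat.mul_succ]
        exact Nat.le_add_left m (m * c)
      obtain ⟨ln, hlnlen, hlnN, hlnprod⟩ := ihc (l.drop m)
        (by rw [List.length_drop, hl, Nat.mul_succ, Nat.add_sub_cancel])
        (fun z hz => hmem z (List.drop_subset m l hz))
      have htake : (l.take m).prod ∈ N := by
        refine prodJ (l.take m) ?_ (fun z hz => hmem z (List.take_subset m l hz))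
        rw [List.length_take]
        exact min_eq_left hm_le
      refine ⟨(l.take m).prod :: ln, by simp [hlnlen], ?_, ?_⟩
      · intro y hy
        rcases List.mem_cons.mp hy with h | h
        · exact h ▸ htake
        · exact hlnN y h
      · conv_lhs => rw [← List.take_append_drop m l]
        rw [List.prod_append, List.prod_cons, hlnprod]
  -- J is nilpotent, hence J ≤ N
  have hJN : J ≤ N := by
    apply hlargest J (m * m) (Nat.mul_pos hm hm)
    intro l hlen hmem
    obtain ⟨ln, hlnlen, hlnN, hlnprod⟩ := chunk m l hlen hmem
    rw [hlnprod]
    exact hmN ln hlnlen hlnN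
  intro x hx
  exact hJN ((hmemJ (δ x)).mpr ⟨x, hx, 0, N.zero_mem, by rw [add_zero]⟩)
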